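/- Triviality of the kernel of the sub-critical scalar linearized operator (intermediate claim in the proof of Lemma 3.4): let N ≥ 2 and assume ∫_{ℝ²}(|∇w|² + w² − Q₀²w²) dx ≥ 0 for every real H¹ function w. If h is a twice continuously differentiable real function on ℝ² with h and ∇h square-integrable satisfying Δh − h + (2N−3)Q²h = 0 on ℝ², then h ≡ 0. -/

import Mathlib

open MeasureTheory Filter

noncomputable section

/-- The plane `ℝ²`. -/
abbrev Plane : Type := EuclideanSpace ℝ (Fin 2)

/-- The `i`-th standard coordinate direction in the plane. -/
def coordDir (i : Fin 2) : Plane := EuclideanSpace.single i (1 : ℝ)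

/-- Squared (Euclidean) norm of the gradient of `f` at `x`:
`|∇f(x)|² = ∑ᵢ ‖∂ᵢ f(x)‖²`. -/
def gradNormSq {E : Type*} [NormedAddCommGroup E] [NormedSpace ℝ E]
    (f : Plane → E) (x : Plane) : ℝ :=
  ∑ i : Fin 2, ‖fderiv ℝ f x (coordDir i)‖ ^ 2

/-- `f` is of class `H¹`: continuously differentiable and `f`, `∇f` square integrable. -/
def IsH1 {E : Type*} [NormedAddCommGroup E] [NormedSpace ℝ E] (f : Plane → E) : Prop :=
  ContDiff ℝ 1 f ∧ Integrable (fun x => ‖f x‖ ^ 2) ∧ Integrable (fun x => gradNormSq f x)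

/-- The Laplacian of a real-valued function on the plane. -/
def lap (f : Plane → ℝ) (x : Plane) : ℝ :=
  ∑ i : Fin 2, fderiv ℝ (fun y => fderiv ℝ f y (coordDir i)) x (coordDir i)

/-- The ground state `Q = (2N-1)^{-1/2} Q₀` of the `N`-coupled system. -/
def groundQ (Q₀ : SchwartzMap Plane ℝ) (N : ℕ) (x : Plane) : ℝ :=
  (Real.sqrt (2 * (N : ℝ) - 1))⁻¹ * Q₀ x

/-- `e^{it}` as a complex number. -/
def mexp (t : ℝ) : ℂ := Complex.exp (Complex.I * (t : ℂ))



section AuxIBP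

open Metric Topology

lemma integral_fderiv_apply_eq_zero {F : Plane → ℝ} (hF : ContDiff ℝ 1 F)
    (hsupp : HasCompactSupport F) (v : Plane) :
    ∫ x, fderiv ℝ F x v = 0 := by
  obtain ⟨C, hC⟩ := (hF.continuous_fderiv (by simp)).bounded_above_of_compact_support (hsupp.fderiv (𝕜 := ℝ))
  set t : ℕ → ℝ := fun n => ((n : ℝ) + 1)⁻¹ with ht_def
  have htpos : ∀ n, 0 < t n := fun n => by positivity
  have htle1 : ∀ n, t n ≤ 1 := fun n => by
    rw [ht_def]
    simp only
    rw [inv_le_one_iff₀]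
    right; linarith [Nat.cast_nonneg (α := ℝ) n]
  set φ : ℕ → Plane → ℝ := fun n x => (t n)⁻¹ * (F (x + t n • v) - F x) with hφ_def
  have hFi : Integrable F := hF.continuous.integrable_of_hasCompactSupport hsupp
  -- each integral is zero
  have hzero : ∀ n, ∫ x, φ n x = 0 := by
    intro n
    have h1 : Integrable (fun x => F (x + t n • v)) := hFi.comp_add_right _
    rw [hφ_def]
    simp only
    rw [integral_const_mul, integral_sub h1 hFi, integral_add_right_eq_self F (t n • v),
      sub_self, mul_zero]
  -- pointwise limit
  have hlim : ∀ x, Tendsto (fun n => φ n x) atTop (𝓝 (fderiv ℝ F x v)) := by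
    intro x
    have h1 : HasDerivAt (fun s : ℝ => x + s • v) v 0 := by
      simpa using ((hasDerivAt_id (0 : ℝ)).smul_const v).const_add x
    have h2 : HasFDerivAt F (fderiv ℝ F x) ((fun s : ℝ => x + s • v) 0) := by
      simpa using (hF.differentiable (by simp) x).hasFDerivAt
    have hd : HasDerivAt (fun s : ℝ => F (x + s • v)) (fderiv ℝ F x v) 0 :=
      h2.comp_hasDerivAt 0 h1
    rw [hasDerivAt_iff_tendsto_slope] at hd
    have ht : Tendsto t atTop (𝓝[≠] (0 : ℝ)) := by
      apply tendsto_nhdsWithin_of_tendsto_nhds_of_eventually_within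
      · simpa [ht_def, one_div] using (tendsto_one_div_add_atTop_nhds_zero_nat : Tendsto (fun n : ℕ => 1 / ((n : ℝ) + 1)) atTop (𝓝 0))
      · exact Eventually.of_forall fun n => (htpos n).ne'
    have := hd.comp ht
    refine this.congr fun n => ?_
    simp [Function.comp, slope, hφ_def, smul_eq_mul]
  -- domination
  set K := cthickening ‖v‖ (tsupport F) with hK_def
  have hKc : IsCompact K := hsupp.cthickening
  have hbound : ∀ n, ∀ᵐ x, ‖φ n x‖ ≤ K.indicator (fun _ => C * ‖v‖) x := by
    intro n
    filter_upwards with x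
    by_cases hx : x ∈ K
    · rw [Set.indicator_of_mem hx]
      have hmvt : ‖F (x + t n • v) - F x‖ ≤ C * ‖x + t n • v - x‖ :=
        convex_univ.norm_image_sub_le_of_norm_fderiv_le
          (fun y _ => (hF.differentiable (by simp) y)) (fun y _ => hC y)
          (Set.mem_univ x) (Set.mem_univ _)
      have hn : ‖x + t n • v - x‖ = t n * ‖v‖ := by
        rw [add_sub_cancel_left, norm_smul, Real.norm_eq_abs, abs_of_pos (htpos n)]
      rw [hn] at hmvt
      have : ‖φ n x‖ = (t n)⁻¹ * ‖F (x + t n • v) - F x‖ := by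
        rw [hφ_def]; simp only
        rw [norm_mul, Real.norm_eq_abs (t n)⁻¹, abs_inv, abs_of_pos (htpos n)]
      rw [this]
      calc (t n)⁻¹ * ‖F (x + t n • v) - F x‖ ≤ (t n)⁻¹ * (C * (t n * ‖v‖)) := by
            apply mul_le_mul_of_nonneg_left hmvt (by positivity)
        _ = C * ‖v‖ := by rw [mul_left_comm, inv_mul_cancel_left₀ (htpos n).ne']
    · rw [Set.indicator_of_notMem hx]
      have hFx : F x = 0 := by
        apply image_eq_zero_of_notMem_tsupport
        exact fun hmem => hx (self_subset_cthickening _ hmem)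
      have hFx2 : F (x + t n • v) = 0 := by
        apply image_eq_zero_of_notMem_tsupport
        intro hmem
        apply hx
        apply mem_cthickening_of_dist_le x (x + t n • v) ‖v‖ _ hmem
        rw [dist_eq_norm]
        have : x - (x + t n • v) = -(t n • v) := by abel
        rw [this, norm_neg, norm_smul, Real.norm_eq_abs, abs_of_pos (htpos n)]
        exact mul_le_of_le_one_left (norm_nonneg v) (htle1 n)
      simp [hφ_def, hFx, hFx2]
  have hmeas : ∀ n, AEStronglyMeasurable (φ n) volume := by
    intro n
    apply Continuous.aestronglyMeasurable
    exact continuous_const.mul ((hF.continuous.comp (continuous_id.add continuous_const)).sub hF.continuous)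
  have hbi : Integrable (K.indicator (fun _ => C * ‖v‖)) := by
    rw [integrable_indicator_iff hKc.isClosed.measurableSet]
    exact integrableOn_const hKc.measure_lt_top.ne
  have hT := tendsto_integral_of_dominated_convergence _ hmeas hbi hbound
    (Eventually.of_forall hlim)
  simp only [hzero] at hT
  exact tendsto_nhds_unique hT tendsto_const_nhds

lemma norm_coordDir (i : Fin 2) : ‖coordDir i‖ = 1 := by
  simp [coordDir, EuclideanSpace.norm_single]

lemma ibp (h : Plane → ℝ) (hc2 : ContDiff ℝ 2 h)
    (hi : Integrable (fun x => h x ^ 2))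
    (hgi : Integrable (fun x => gradNormSq h x))
    (hlapi : Integrable (fun x => h x * lap h x)) :
    ∫ x, (gradNormSq h x + h x * lap h x) = 0 := by
  classical
  -- first derivatives
  set D : Fin 2 → Plane → ℝ := fun i x => fderiv ℝ h x (coordDir i) with hD_def
  have h12 : (1 : WithTop ℕ∞) + 1 ≤ 2 := by norm_num
  have hDdiff : ∀ i, ContDiff ℝ 1 (D i) := fun i =>
    (hc2.fderiv_right h12).clm_apply contDiff_const
  have hgrad_eq : ∀ x, gradNormSq h x = ∑ i, (D i x) ^ 2 := by
    intro x
    simp [gradNormSq, hD_def, Real.norm_eq_abs, sq_abs]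
  -- bump function
  set χ₀ : ContDiffBump (0 : Plane) := ⟨1, 2, one_pos, one_lt_two⟩ with hχ₀_def
  obtain ⟨Cχ, hCχ⟩ := ((χ₀.contDiff (n := 1)).continuous_fderiv (by simp)).bounded_above_of_compact_support
    (χ₀.hasCompactSupport.fderiv (𝕜 := ℝ))
  have hCχ0 : 0 ≤ Cχ := le_trans (norm_nonneg _) (hCχ 0)
  set c : ℕ → ℝ := fun n => ((n : ℝ) + 1)⁻¹ with hc_def
  have hcpos : ∀ n, 0 < c n := fun n => by positivity
  have hcle1 : ∀ n, c n ≤ 1 := fun n => by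
    rw [hc_def]; simp only
    rw [inv_le_one_iff₀]; right; linarith [Nat.cast_nonneg (α := ℝ) n]
  set L : ℕ → (Plane →L[ℝ] Plane) := fun n => c n • ContinuousLinearMap.id ℝ Plane with hL_def
  set χ : ℕ → Plane → ℝ := fun n x => χ₀ (L n x) with hχ_def
  have hLx : ∀ n x, L n x = c n • x := fun n x => rfl
  have hχdiff : ∀ n, ContDiff ℝ 1 (χ n) :=
    fun n => (χ₀.contDiff (n := 1)).comp ((L n).contDiff)
  have hχsupp : ∀ n, HasCompactSupport (χ n) := by
    intro n
    apply HasCompactSupport.intro (isCompact_closedBall (0 : Plane) (2 * ((n : ℝ) + 1)))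
    intro x hx
    simp only [mem_closedBall, dist_zero_right, not_le] at hx
    have : χ₀ (L n x) = 0 := by
      apply χ₀.zero_of_le_dist
      rw [hLx, dist_zero_right, norm_smul, Real.norm_eq_abs, abs_of_pos (hcpos n)]
      show (χ₀.rOut : ℝ) ≤ _
      have h2 : (χ₀.rOut : ℝ) = 2 := rfl
      rw [h2, hc_def]
      simp only
      rw [le_inv_mul_iff₀ (by positivity)]
      linarith
    exact this
  -- one on big balls
  have hχone : ∀ (n : ℕ) (x : Plane), ‖x‖ < (n : ℝ) + 1 → χ n x = 1 := by
    intro n x hx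
    apply χ₀.one_of_mem_closedBall
    rw [mem_closedBall, hLx, dist_zero_right, norm_smul, Real.norm_eq_abs,
      abs_of_pos (hcpos n)]
    show _ ≤ (1:ℝ)
    rw [hc_def]
    simp only
    rw [inv_mul_le_iff₀ (by positivity)]
    linarith
  -- derivative bound
  have hχderiv : ∀ n x, ‖fderiv ℝ (χ n) x‖ ≤ Cχ := by
    intro n x
    have hcomp : fderiv ℝ (χ n) x = (fderiv ℝ (⇑χ₀) (L n x)).comp (L n) := by
      rw [hχ_def]
      have := fderiv_comp (𝕜 := ℝ) x (g := ⇑χ₀) (f := ⇑(L n))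
        ((χ₀.contDiff (n := 1)).differentiable (by simp) _) ((L n).differentiableAt)
      rw [(L n).fderiv] at this
      exact this
    rw [hcomp]
    calc ‖(fderiv ℝ (⇑χ₀) (L n x)).comp (L n)‖ ≤ ‖fderiv ℝ (⇑χ₀) (L n x)‖ * ‖L n‖ :=
          ContinuousLinearMap.opNorm_comp_le _ _
      _ ≤ Cχ * 1 := by
          apply mul_le_mul (hCχ _) ?_ (norm_nonneg _) hCχ0
          rw [hL_def]
          calc ‖c n • ContinuousLinearMap.id ℝ Plane‖ ≤ ‖c n‖ * ‖ContinuousLinearMap.id ℝ Plane‖ := by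
                exact ContinuousLinearMap.opNorm_smul_le _ _
            _ ≤ 1 * 1 := by
                apply mul_le_mul ?_ ContinuousLinearMap.norm_id_le (norm_nonneg _) zero_le_one
                rw [Real.norm_eq_abs, abs_of_pos (hcpos n)]; exact hcle1 n
            _ = 1 := one_mul 1
      _ = Cχ := mul_one Cχ
  -- second derivatives applied in direction i
  set E : Fin 2 → Plane → ℝ := fun i x => fderiv ℝ (D i) x (coordDir i) with hE_def
  have hlap_eq : ∀ x, lap h x = ∑ i, E i x := fun x => rfl
  have hh1 : ContDiff ℝ 1 h := hc2.of_le one_le_two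
  have hGdiff : ∀ (n : ℕ) (i : Fin 2), ContDiff ℝ 1 (fun y => χ n y * (h y * D i y)) :=
    fun n i => (hχdiff n).mul (hh1.mul (hDdiff i))
  have hGsupp : ∀ (n : ℕ) (i : Fin 2), HasCompactSupport (fun y => χ n y * (h y * D i y)) :=
    fun n i => (hχsupp n).mul_right
  set Φ : ℕ → Plane → ℝ :=
    fun n x => ∑ i, fderiv ℝ (fun y => χ n y * (h y * D i y)) x (coordDir i) with hΦ_def
  have hint_each : ∀ (n : ℕ) (i : Fin 2),
      Integrable (fun x => fderiv ℝ (fun y => χ n y * (h y * D i y)) x (coordDir i)) := by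
    intro n i
    apply Continuous.integrable_of_hasCompactSupport
    · exact ((hGdiff n i).continuous_fderiv (by simp)).clm_apply continuous_const
    · exact (hGsupp n i).fderiv_apply (𝕜 := ℝ) _
  have hΦint : ∀ n, Integrable (Φ n) := by
    intro n
    rw [hΦ_def]
    exact integrable_finset_sum _ (fun i _ => hint_each n i)
  have hΦzero : ∀ n, ∫ x, Φ n x = 0 := by
    intro n
    rw [hΦ_def]
    simp only
    rw [integral_finset_sum _ (fun i _ => hint_each n i)]
    refine Finset.sum_eq_zero fun i _ => ?_
    exact integral_fderiv_apply_eq_zero (hGdiff n i) (hGsupp n i) _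
  -- product-rule expansion
  have hterm : ∀ (n : ℕ) (x : Plane) (i : Fin 2),
      fderiv ℝ (fun y => χ n y * (h y * D i y)) x (coordDir i)
        = fderiv ℝ (χ n) x (coordDir i) * (h x * D i x)
          + χ n x * (D i x * D i x + h x * E i x) := by
    intro n x i
    have hhd : DifferentiableAt ℝ h x := hh1.differentiable (by simp) x
    have hDd : DifferentiableAt ℝ (D i) x := (hDdiff i).differentiable (by simp) x
    have hχd : DifferentiableAt ℝ (χ n) x := (hχdiff n).differentiable (by simp) x
    have hmul : DifferentiableAt ℝ (fun y => h y * D i y) x := hhd.mul hDd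
    have e1 : fderiv ℝ (fun y => χ n y * (h y * D i y)) x
        = χ n x • fderiv ℝ (fun y => h y * D i y) x
          + (h x * D i x) • fderiv ℝ (χ n) x := fderiv_mul hχd hmul
    have e2 : fderiv ℝ (fun y => h y * D i y) x
        = h x • fderiv ℝ (D i) x + D i x • fderiv ℝ h x := fderiv_mul hhd hDd
    rw [e1]
    simp only [ContinuousLinearMap.add_apply, ContinuousLinearMap.coe_smul',
      Pi.smul_apply, smul_eq_mul]
    rw [e2]
    simp only [ContinuousLinearMap.add_apply, ContinuousLinearMap.coe_smul',
      Pi.smul_apply, smul_eq_mul, hE_def, hD_def]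
    ring
  have hexp : ∀ (n : ℕ) (x : Plane), Φ n x =
      (∑ i, fderiv ℝ (χ n) x (coordDir i) * (h x * D i x))
        + χ n x * ((∑ i, (D i x) ^ 2) + h x * lap h x) := by
    intro n x
    rw [hΦ_def]
    simp only [Fin.sum_univ_two, hterm n x, hlap_eq x]
    ring
  -- pointwise limit
  have hlimpt : ∀ x : Plane, Tendsto (fun n => Φ n x) atTop
      (𝓝 (gradNormSq h x + h x * lap h x)) := by
    intro x
    have hev : ∀ᶠ n in atTop, Φ n x = gradNormSq h x + h x * lap h x := by
      filter_upwards [eventually_ge_atTop ⌈‖x‖⌉₊] with n hn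
      have hxn : ‖x‖ < (n : ℝ) + 1 := by
        have h1 : ‖x‖ ≤ (⌈‖x‖⌉₊ : ℝ) := Nat.le_ceil _
        have h2 : ((⌈‖x‖⌉₊ : ℕ) : ℝ) ≤ (n : ℝ) := by exact_mod_cast hn
        linarith
      have hone : χ n x = 1 := hχone n x hxn
      have hfz : fderiv ℝ (χ n) x = 0 := by
        have hball : Metric.ball (0 : Plane) ((n : ℝ) + 1) ∈ 𝓝 x :=
          Metric.isOpen_ball.mem_nhds (by simpa [mem_ball, dist_zero_right] using hxn)
        have hev1 : χ n =ᶠ[𝓝 x] fun _ => 1 := by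
          filter_upwards [hball] with y hy
          exact hχone n y (by simpa [mem_ball, dist_zero_right] using hy)
        rw [hev1.fderiv_eq]
        exact fderiv_const_apply 1
      rw [hexp n x, hone, hgrad_eq x, hfz]
      simp
    refine Tendsto.congr' ?_ tendsto_const_nhds
    exact hev.mono fun n hn => hn.symm
  -- dominating function
  have hbint : Integrable (fun x =>
      Cχ * (2 * h x ^ 2 + gradNormSq h x) + (gradNormSq h x + |h x * lap h x|)) :=
    (((hi.const_mul 2).add hgi).const_mul Cχ).add (hgi.add hlapi.abs)
  have hbnd : ∀ n, ∀ᵐ x, ‖Φ n x‖ ≤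
      Cχ * (2 * h x ^ 2 + gradNormSq h x) + (gradNormSq h x + |h x * lap h x|) := by
    intro n
    filter_upwards with x
    rw [Real.norm_eq_abs, hexp n x]
    simp only [Fin.sum_univ_two]
    have habs1 : ∀ i : Fin 2, |fderiv ℝ (χ n) x (coordDir i) * (h x * D i x)|
        ≤ Cχ * (h x ^ 2 + D i x ^ 2) := by
      intro i
      rw [abs_mul]
      have hA : |fderiv ℝ (χ n) x (coordDir i)| ≤ Cχ := by
        calc |fderiv ℝ (χ n) x (coordDir i)| = ‖fderiv ℝ (χ n) x (coordDir i)‖ := rfl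
          _ ≤ ‖fderiv ℝ (χ n) x‖ * ‖coordDir i‖ := (fderiv ℝ (χ n) x).le_opNorm _
          _ = ‖fderiv ℝ (χ n) x‖ := by rw [norm_coordDir, mul_one]
          _ ≤ Cχ := hχderiv n x
      have hB : |h x * D i x| ≤ h x ^ 2 + D i x ^ 2 := by
        rw [abs_mul]
        nlinarith [sq_nonneg (|h x| - |D i x|), sq_abs (h x), sq_abs (D i x),
          abs_nonneg (h x), abs_nonneg (D i x)]
      exact mul_le_mul hA hB (abs_nonneg _) hCχ0
    have hχabs : |χ n x| ≤ 1 := by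
      rw [abs_of_nonneg (χ₀.nonneg)]
      exact χ₀.le_one
    have hS : |χ n x * ((D 0 x ^ 2 + D 1 x ^ 2) + h x * lap h x)|
        ≤ (D 0 x ^ 2 + D 1 x ^ 2) + |h x * lap h x| := by
      rw [abs_mul]
      calc |χ n x| * |(D 0 x ^ 2 + D 1 x ^ 2) + h x * lap h x|
          ≤ 1 * |(D 0 x ^ 2 + D 1 x ^ 2) + h x * lap h x| :=
            mul_le_mul_of_nonneg_right hχabs (abs_nonneg _)
        _ = |(D 0 x ^ 2 + D 1 x ^ 2) + h x * lap h x| := one_mul _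
        _ ≤ |D 0 x ^ 2 + D 1 x ^ 2| + |h x * lap h x| := abs_add_le _ _
        _ ≤ (D 0 x ^ 2 + D 1 x ^ 2) + |h x * lap h x| := by
            rw [abs_of_nonneg (by positivity : (0:ℝ) ≤ D 0 x ^ 2 + D 1 x ^ 2)]
    have hgx : gradNormSq h x = D 0 x ^ 2 + D 1 x ^ 2 := by
      rw [hgrad_eq x, Fin.sum_univ_two]
    rw [hgx]
    calc |(fderiv ℝ (χ n) x (coordDir 0) * (h x * D 0 x)
            + fderiv ℝ (χ n) x (coordDir 1) * (h x * D 1 x))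
          + χ n x * ((D 0 x ^ 2 + D 1 x ^ 2) + h x * lap h x)|
        ≤ |fderiv ℝ (χ n) x (coordDir 0) * (h x * D 0 x)
            + fderiv ℝ (χ n) x (coordDir 1) * (h x * D 1 x)|
          + |χ n x * ((D 0 x ^ 2 + D 1 x ^ 2) + h x * lap h x)| := abs_add_le _ _
      _ ≤ (|fderiv ℝ (χ n) x (coordDir 0) * (h x * D 0 x)|
            + |fderiv ℝ (χ n) x (coordDir 1) * (h x * D 1 x)|)
          + ((D 0 x ^ 2 + D 1 x ^ 2) + |h x * lap h x|) :=
            add_le_add (abs_add_le _ _) hS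
      _ ≤ (Cχ * (h x ^ 2 + D 0 x ^ 2) + Cχ * (h x ^ 2 + D 1 x ^ 2))
          + ((D 0 x ^ 2 + D 1 x ^ 2) + |h x * lap h x|) :=
            add_le_add (add_le_add (habs1 0) (habs1 1)) le_rfl
      _ = Cχ * (2 * h x ^ 2 + (D 0 x ^ 2 + D 1 x ^ 2))
          + ((D 0 x ^ 2 + D 1 x ^ 2) + |h x * lap h x|) := by ring
  have hmeas : ∀ n, AEStronglyMeasurable (Φ n) volume :=
    fun n => (hΦint n).aestronglyMeasurable
  have hT := tendsto_integral_of_dominated_convergence _ hmeas hbint hbnd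
    (Eventually.of_forall hlimpt)
  simp only [hΦzero] at hT
  exact tendsto_nhds_unique hT tendsto_const_nhds

end AuxIBP

/-- Triviality of the kernel of the sub-critical scalar linearized
operator (intermediate claim in the proof of Lemma 3.4). -/
theorem subcritical_kernel_trivial
    (Q₀ : SchwartzMap Plane ℝ)
    (hQpos : ∀ x, 0 < Q₀ x)
    (hQrad : ∀ x y : Plane, ‖x‖ = ‖y‖ → Q₀ x = Q₀ y)
    (hQeq : ∀ x, lap (⇑Q₀) x - Q₀ x + Q₀ x ^ 3 = 0)
    (N : ℕ) (hN : 2 ≤ N)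
    (hLminus : ∀ w : Plane → ℝ, IsH1 w →
      0 ≤ ∫ x, (gradNormSq w x + w x ^ 2 - Q₀ x ^ 2 * w x ^ 2))
    (h : Plane → ℝ) (hc2 : ContDiff ℝ 2 h)
    (hi : Integrable (fun x => h x ^ 2))
    (hgi : Integrable (fun x => gradNormSq h x))
    (heq : ∀ x, lap h x - h x + (2 * (N : ℝ) - 3) * groundQ Q₀ N x ^ 2 * h x = 0) :
    ∀ x, h x = 0 := by
  classical
  have hN2 : (2 : ℝ) ≤ (N : ℝ) := by exact_mod_cast hN
  have hden : (0 : ℝ) < 2 * (N : ℝ) - 1 := by linarith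
  set κ : ℝ := (2 * (N : ℝ) - 3) * (2 * (N : ℝ) - 1)⁻¹ with hκ_def
  have hκlt1 : κ < 1 := by
    rw [hκ_def]
    rw [mul_inv_lt_iff₀ hden]
    linarith
  -- rewrite the equation
  have hgq : ∀ x, groundQ Q₀ N x ^ 2 = (2 * (N : ℝ) - 1)⁻¹ * Q₀ x ^ 2 := by
    intro x
    rw [groundQ, mul_pow, inv_pow, Real.sq_sqrt hden.le]
  have hlap : ∀ x, h x * lap h x = h x ^ 2 - κ * (Q₀ x ^ 2 * h x ^ 2) := by
    intro x
    have := heq x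
    have hl : lap h x = h x - (2 * (N : ℝ) - 3) * groundQ Q₀ N x ^ 2 * h x := by linarith
    rw [hl, hgq x, hκ_def]
    ring
  -- integrability of Q₀² h²
  obtain ⟨CQ, hCQ⟩ := Q₀.decay' 0 0
  have hQbd : ∀ x, |Q₀ x| ≤ CQ := by
    intro x
    have := hCQ x
    simp [norm_iteratedFDeriv_zero, Real.norm_eq_abs] at this
    exact this
  have hQcont : Continuous fun x => Q₀ x ^ 2 * h x ^ 2 :=
    (Q₀.continuous.pow 2).mul ((hc2.continuous).pow 2)
  have hQ2h2 : Integrable (fun x => Q₀ x ^ 2 * h x ^ 2) := by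
    apply Integrable.mono' (hi.const_mul (CQ ^ 2)) hQcont.aestronglyMeasurable
    filter_upwards with x
    rw [Real.norm_eq_abs, abs_of_nonneg (by positivity)]
    have h1 : Q₀ x ^ 2 ≤ CQ ^ 2 := by
      have := hQbd x
      nlinarith [abs_nonneg (Q₀ x), sq_abs (Q₀ x)]
    nlinarith [sq_nonneg (h x)]
  -- apply integration by parts
  have hlapi : Integrable (fun x => h x * lap h x) := by
    have : (fun x => h x * lap h x) = fun x => h x ^ 2 - κ * (Q₀ x ^ 2 * h x ^ 2) :=
      funext hlap
    rw [this]
    exact hi.sub (hQ2h2.const_mul κ)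
  have hibp := ibp h hc2 hi hgi hlapi
  set I1 := ∫ x, gradNormSq h x with hI1
  set I2 := ∫ x, h x ^ 2 with hI2
  set I3 := ∫ x, Q₀ x ^ 2 * h x ^ 2 with hI3
  have hsplit1 : I1 + (I2 - κ * I3) = 0 := by
    have e : ∫ x, (gradNormSq h x + h x * lap h x)
        = ∫ x, (gradNormSq h x + (h x ^ 2 - κ * (Q₀ x ^ 2 * h x ^ 2))) := by
      congr 1
      funext x
      rw [hlap x]
    have hints : Integrable (fun x => h x ^ 2 - κ * (Q₀ x ^ 2 * h x ^ 2)) := by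
      exact hi.sub (hQ2h2.const_mul κ)
    have hintm : Integrable (fun x => κ * (Q₀ x ^ 2 * h x ^ 2)) := by
      exact hQ2h2.const_mul κ
    rw [e, integral_add hgi hints, integral_sub hi hintm, integral_const_mul] at hibp
    exact hibp
  -- apply the positivity hypothesis
  have hH1 : IsH1 h := by
    refine ⟨hc2.of_le one_le_two, ?_, hgi⟩
    simpa [Real.norm_eq_abs, sq_abs] using hi
  have hpos := hLminus h hH1
  have hsplit2 : (0 : ℝ) ≤ I1 + I2 - I3 := by
    have hinta : Integrable (fun x => gradNormSq h x + h x ^ 2) := by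
      exact hgi.add hi
    rw [integral_sub hinta hQ2h2, integral_add hgi hi] at hpos
    exact hpos
  -- conclude I3 = 0
  have hI3nonneg : (0 : ℝ) ≤ I3 :=
    integral_nonneg fun x => by positivity
  have hI3zero : I3 = 0 := by nlinarith
  -- pointwise vanishing
  have hiz : (∫ x, Q₀ x ^ 2 * h x ^ 2) = 0 := by rw [← hI3]; exact hI3zero
  have hae : (fun x => Q₀ x ^ 2 * h x ^ 2) =ᵐ[volume] 0 :=
    (integral_eq_zero_iff_of_nonneg (fun x => by positivity) hQ2h2).1 hiz
  have heqfun : (fun x => Q₀ x ^ 2 * h x ^ 2) = 0 :=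
    (Continuous.ae_eq_iff_eq volume hQcont continuous_const).1 hae
  intro x
  have hx : Q₀ x ^ 2 * h x ^ 2 = 0 := congrFun heqfun x
  have hQx : (0:ℝ) < Q₀ x ^ 2 := pow_pos (hQpos x) 2
  have : h x ^ 2 = 0 := by
    rcases mul_eq_zero.1 hx with h1 | h1
    · exact absurd h1 hQx.ne'
    · exact h1
  exact pow_eq_zero_iff (by norm_num) |>.1 this
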